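/- Let C be a 3×3 unitary matrix with entries a^{(i,j)} and λ ∈ ℝ with e^{iλ} ≠ a^{(2,2)}. Then A(λ) = 0 if and only if D(λ) = 0. -/

import Mathlib

open Complex Matrix ComplexConjugate

noncomputable section

/-- `A(λ)` for a 3×3 coin matrix `M`. -/
def coefA (M : Matrix (Fin 3) (Fin 3) ℂ) (lam : ℝ) : ℂ :=
  M 0 0 + M 0 1 * M 1 0 / (Complex.exp (lam * Complex.I) - M 1 1)

/-- `D(λ)` for a 3×3 coin matrix `M`. -/
def coefD (M : Matrix (Fin 3) (Fin 3) ℂ) (lam : ℝ) : ℂ :=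
  M 2 2 + M 2 1 * M 1 2 / (Complex.exp (lam * Complex.I) - M 1 1)

/-- for a 3×3 unitary coin `M` and `λ ∈ ℝ` with `e^{iλ} ≠ a^{(2,2)}`,
`A(λ) = 0` iff `D(λ) = 0`. -/
theorem coefA_eq_zero_iff_coefD_eq_zero (M : Matrix (Fin 3) (Fin 3) ℂ)
    (hM : M ∈ Matrix.unitaryGroup (Fin 3) ℂ) (lam : ℝ)
    (hne : Complex.exp (lam * Complex.I) ≠ M 1 1) :
    coefA M lam = 0 ↔ coefD M lam = 0 := by
  set z := Complex.exp (lam * Complex.I) with hzdef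
  have hsub : z - M 1 1 ≠ 0 := sub_ne_zero.mpr hne
  have h1 : M * star M = 1 := (Matrix.mem_unitaryGroup_iff).mp hM
  have h2 : star M * M = 1 := (Matrix.mem_unitaryGroup_iff').mp hM
  set d := M.det with hddef
  -- adjugate M = d • star M
  have hadj : adjugate M = d • star M := by
    calc adjugate M = 1 * adjugate M := (one_mul _).symm
      _ = star M * (M * adjugate M) := by rw [← h2, mul_assoc]
      _ = star M * (d • 1) := by rw [Matrix.mul_adjugate]
      _ = d • star M := by rw [Matrix.mul_smul, mul_one]
  -- cofactor identities
  have hc22 : M 0 0 * M 1 1 - M 0 1 * M 1 0 = d * conj (M 2 2) := by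
    have := congrFun (congrFun hadj 2) 2
    rw [adjugate_fin_three] at this
    simpa [Matrix.smul_apply, Matrix.conjTranspose_apply, smul_eq_mul] using this
  have hc00 : M 1 1 * M 2 2 - M 1 2 * M 2 1 = d * conj (M 0 0) := by
    have := congrFun (congrFun hadj 0) 0
    rw [adjugate_fin_three] at this
    simpa [Matrix.smul_apply, Matrix.conjTranspose_apply, smul_eq_mul] using this
  -- |d| = 1 and |z| = 1
  have hd : d * conj d = 1 := by
    have := congrArg Matrix.det h1
    simp only [Matrix.det_mul, Matrix.det_one, Matrix.star_eq_conjTranspose,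
      Matrix.det_conjTranspose] at this
    simpa [hddef, mul_comm] using this
  have hz : z * conj z = 1 := by
    have : conj z = Complex.exp (-(lam * Complex.I)) := by
      rw [hzdef, ← Complex.exp_conj]
      congr 1
      simp [Complex.conj_ofReal]
    rw [this, ← Complex.exp_add, add_neg_cancel, Complex.exp_zero]
  have key : ∀ a b : ℂ, a * z = d * conj b → b * z = d * conj a := by
    intro a b h
    have hc : conj a * conj z = conj d * b := by
      have := congrArg conj h
      simpa [_root_.map_mul] using this
    linear_combination (-(d*z)) * hc + (d * conj a) * hz + (-(b*z)) * hd
  have hA : coefA M lam = 0 ↔ M 0 0 * z = d * conj (M 2 2) := by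
    rw [coefA, ← hzdef]
    rw [← hc22]
    constructor
    · intro h
      field_simp at h
      linear_combination h
    · intro h
      field_simp
      linear_combination h
  have hD : coefD M lam = 0 ↔ M 2 2 * z = d * conj (M 0 0) := by
    rw [coefD, ← hzdef]
    rw [← hc00]
    constructor
    · intro h
      field_simp at h
      linear_combination h
    · intro h
      field_simp
      linear_combination h
  rw [hA, hD]
  exact ⟨key _ _, key _ _⟩
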